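/- Let X and Y be independent real random variables on a probability space such that X is Gamma-distributed with shape a > 0 and scale θ₁ > 0 and Y is Gamma-distributed with shape b > 0 and scale θ₂ > 0, let c > 0 be a real constant, and let λ > 0. Then P(cX/Y < λ) = (Γ(a+b)/(Γ(a)Γ(b))) · ∫₀^ψ t^{a−1}(1−t)^{b−1} dt, where ψ = λθ₂/(cθ₁ + λθ₂); i.e., the outage probability equals the regularized incomplete Beta function evaluated at ψ. -/

import Mathlib

open MeasureTheory ProbabilityTheory

open Real Set in
private lemma lintegral_image_1d {s : Set ℝ} {f f' : ℝ → ℝ} (hs : MeasurableSet s)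
    (hf' : ∀ x ∈ s, HasDerivWithinAt f (f' x) s x) (hf : Set.InjOn f s) (g : ℝ → ENNReal) :
    ∫⁻ x in f '' s, g x = ∫⁻ x in s, ENNReal.ofReal |f' x| * g (f x) := by
  simpa only [ContinuousLinearMap.det_toSpanSingleton] using
    lintegral_image_eq_lintegral_abs_det_fderiv_mul volume hs
      (fun x hx => (hf' x hx).hasFDerivWithinAt) hf g


open Real Set in
private lemma aux_int (k r : ℝ) (hk : 0 < k) (hr : 0 < r) :
    IntegrableOn (fun y : ℝ => y ^ (k-1) * Real.exp (-(r*y))) (Set.Ioi 0) := by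
  have h := integrableOn_rpow_mul_exp_neg_mul_rpow (s := k-1) (p := 1) (by linarith) one_pos hr
  simpa [Real.rpow_one, neg_mul] using h


open Real Set in
private lemma aux_gamma (k r : ℝ) (hk : 0 < k) (hr : 0 < r) :
    ∫⁻ y in Set.Ioi (0:ℝ), ENNReal.ofReal (y ^ (k-1) * Real.exp (-(r * y))) =
      ENNReal.ofReal ((1/r) ^ k * Real.Gamma k) := by
  rw [← Real.integral_rpow_mul_exp_neg_mul_Ioi hk hr,
    ← ofReal_integral_eq_lintegral_ofReal (aux_int k r hk hr)]
  filter_upwards [ae_restrict_mem measurableSet_Ioi] with y hy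
  have : (0:ℝ) < y := hy
  positivity


open Real Set in
private lemma pointwise_id (a θ₁ b θ₂ : ℝ) (ha : 0 < a) (hθ₁ : 0 < θ₁) (hb : 0 < b) (hθ₂ : 0 < θ₂)
    (y t : ℝ) (hy : 0 < y) (ht : 0 < t) (ht1 : t < 1) :
    (y^(b-1) * Real.exp (-y/θ₂) / (θ₂^b * Real.Gamma b)) *
      (((θ₁/θ₂)*y/(1-t)^2) *
        ((((θ₁/θ₂)*y*(t/(1-t)))^(a-1) * Real.exp (-((θ₁/θ₂)*y*(t/(1-t)))/θ₁)) / (θ₁^a * Real.Gamma a)))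
    = (t^(a-1)*(1-t)^(b-1) / (Real.Gamma a * Real.Gamma b * ((1-t)*θ₂)^(a+b))) *
      (y^(a+b-1) * Real.exp (-(1/((1-t)*θ₂) * y))) := by
  have h1t : 0 < 1 - t := by linarith
  have hGa := Real.Gamma_pos_of_pos ha
  have hGb := Real.Gamma_pos_of_pos hb
  have e2 : ∀ u:ℝ, 0 < u → u^a = u^(a-1)*u := fun u hu => by
    rw [← Real.rpow_add_one hu.ne' (a-1)]; norm_num
  have e3 : ∀ u:ℝ, 0 < u → u^b = u^(b-1)*u := fun u hu => by
    rw [← Real.rpow_add_one hu.ne' (b-1)]; norm_num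
  have e1 : ∀ u:ℝ, 0 < u → u^(a+b) = u^(a-1)*u^(b-1)*(u*u) := fun u hu => by
    rw [show a+b = (a-1)+((b-1)+(1+1)) by ring, rpow_add hu, rpow_add hu, rpow_add hu, rpow_one]
    ring
  have e4 : y^(a+b-1) = y^(a-1)*y^(b-1)*y := by
    rw [show a+b-1 = (a-1)+((b-1)+1) by ring, rpow_add hy, rpow_add hy, rpow_one]
    ring
  have eexp : Real.exp (-(1/((1-t)*θ₂) * y)) =
      Real.exp (-y/θ₂) * Real.exp (-((θ₁/θ₂)*y*(t/(1-t)))/θ₁) := by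
    rw [← Real.exp_add]
    congr 1
    field_simp
    ring
  rw [eexp, e4, mul_rpow (by positivity) (by positivity),
    mul_rpow (by positivity) (by positivity), div_rpow hθ₁.le hθ₂.le,
    div_rpow ht.le h1t.le, mul_rpow h1t.le hθ₂.le,
    e1 _ h1t, e1 _ hθ₂, e2 _ hθ₁, e3 _ hθ₂]
  have h2 : (0:ℝ) < (1-t)^2 := by positivity
  field_simp


open Real Set in
private lemma phi_image (K ψ : ℝ) (hK : 0 < K) (hψ0 : 0 < ψ) (hψ1 : ψ < 1) :
    (fun t => K*(t/(1-t))) '' Set.Ioo 0 ψ = Set.Ioo 0 (K*(ψ/(1-ψ))) := by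
  ext x
  constructor
  · rintro ⟨t, ⟨ht0, htψ⟩, rfl⟩
    have h1t : 0 < 1 - t := by linarith
    have h1ψ : 0 < 1 - ψ := by linarith
    constructor
    · positivity
    · have : t/(1-t) < ψ/(1-ψ) := by
        rw [div_lt_div_iff₀ h1t h1ψ]
        nlinarith
      exact (mul_lt_mul_iff_right₀ hK).2 this
  · rintro ⟨hx0, hx1⟩
    have h1ψ : 0 < 1 - ψ := by linarith
    have hkey : x * (1-ψ) < K * ψ := by
      rw [mul_div_assoc'] at hx1
      exact (lt_div_iff₀ h1ψ).1 hx1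
    refine ⟨x/(x+K), ⟨by positivity, ?_⟩, ?_⟩
    · rw [div_lt_iff₀ (by positivity)]
      nlinarith
    · have hxK : 0 < x + K := by positivity
      field_simp
      rw [show x + K - x = K by ring, div_self hK.ne']


open Real Set in
private lemma phi_deriv (K ψ : ℝ) (t : ℝ) (ht : t ∈ Set.Ioo 0 ψ) (hψ1 : ψ < 1) :
    HasDerivWithinAt (fun t => K*(t/(1-t))) (K/(1-t)^2) (Set.Ioo 0 ψ) t := by
  have h1t : 1 - t ≠ 0 := by cases ht; intro h; nlinarith
  have h := ((hasDerivAt_id t).div ((hasDerivAt_id t).const_sub 1) h1t).const_mul K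
  simp only [id, Pi.div_apply] at h
  exact h.hasDerivWithinAt.congr_deriv (by field_simp; ring)


open Real Set in
private lemma phi_inj (K ψ : ℝ) (hK : 0 < K) (hψ1 : ψ < 1) :
    Set.InjOn (fun t => K*(t/(1-t))) (Set.Ioo 0 ψ) := by
  rintro t₁ ⟨h₁, h₁'⟩ t₂ ⟨h₂, h₂'⟩ h
  have e₁ : 1 - t₁ ≠ 0 := by intro hh; nlinarith
  have e₂ : 1 - t₂ ≠ 0 := by intro hh; nlinarith
  simp only at h
  have := mul_left_cancel₀ hK.ne' h
  field_simp at this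
  nlinarith [this]


open Real Set in
private lemma beta_integrable (a b ψ : ℝ) (ha : 0 < a) (hψ0 : 0 < ψ) (hψ1 : ψ < 1) :
    IntegrableOn (fun t : ℝ => t^(a-1)*(1-t)^(b-1)) (Set.Ioo 0 ψ) := by
  have hg : IntegrableOn (fun t : ℝ => t^(a-1)) (Set.Ioo 0 ψ) := by
    have := (intervalIntegral.intervalIntegrable_rpow' (r := a-1) (by linarith)
        : IntervalIntegrable (fun x : ℝ => x ^ (a-1)) volume 0 ψ)
    rw [intervalIntegrable_iff_integrableOn_Ioc_of_le hψ0.le] at this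
    exact this.mono_set Set.Ioo_subset_Ioc_self
  have hf : AEStronglyMeasurable (fun t : ℝ => (1-t)^(b-1))
      (volume.restrict (Set.Ioo 0 ψ)) := by
    apply Measurable.aestronglyMeasurable
    exact (measurable_const.sub measurable_id).pow_const _
  have hbd : ∀ᵐ t ∂(volume.restrict (Set.Ioo 0 ψ)),
      ‖(1-t)^(b-1)‖ ≤ max 1 ((1-ψ)^(b-1)) := by
    filter_upwards [ae_restrict_mem measurableSet_Ioo] with t ⟨ht0, htψ⟩
    have h1t : 0 < 1 - t := by linarith
    rw [Real.norm_eq_abs, abs_of_nonneg (rpow_nonneg h1t.le _)]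
    rcases le_or_gt 1 b with hb1 | hb1
    · exact le_max_of_le_left (Real.rpow_le_one h1t.le (by linarith) (by linarith))
    · exact le_max_of_le_right (Real.rpow_le_rpow_of_nonpos (by linarith) (by linarith)
        (by linarith))
  have := Integrable.bdd_mul hg hf hbd
  simpa [IntegrableOn, mul_comm] using this


/-- Density of a Gamma distribution with shape `k > 0` and scale `θ > 0`. -/
noncomputable def gammaDensity (k θ : ℝ) (x : ℝ) : ENNReal :=
  if 0 < x then ENNReal.ofReal (x ^ (k - 1) * Real.exp (-x / θ) / (θ ^ k * Real.Gamma k)) else 0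


open Real Set in
private lemma gammaDensity_measurable (k θ : ℝ) : Measurable (gammaDensity k θ) := by
  apply Measurable.ite measurableSet_Ioi _ measurable_const
  apply Measurable.ennreal_ofReal
  exact ((measurable_id.pow_const _).mul (measurable_id.neg.div_const _).exp).div_const _


open Real Set in
private lemma gammaDensity_ne_top (k θ : ℝ) (x : ℝ) : gammaDensity k θ x ≠ ⊤ := by
  unfold gammaDensity; split <;> simp


open Real Set in
private lemma key (a θ₁ b θ₂ s : ℝ) (ha : 0 < a) (hθ₁ : 0 < θ₁) (hb : 0 < b) (hθ₂ : 0 < θ₂)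
    (hs : 0 < s) :
    ∫⁻ y in Set.Ioi (0:ℝ), gammaDensity b θ₂ y * ∫⁻ x in Set.Ioo 0 (s*y), gammaDensity a θ₁ x
      = ENNReal.ofReal ((Real.Gamma (a+b) / (Real.Gamma a * Real.Gamma b)) *
          ∫ t in (0:ℝ)..(s*θ₂/(θ₁+s*θ₂)), t^(a-1)*(1-t)^(b-1)) := by
  have hGa := Real.Gamma_pos_of_pos ha
  have hGb := Real.Gamma_pos_of_pos hb
  have hGab := Real.Gamma_pos_of_pos (by linarith : (0:ℝ) < a + b)
  set ψ := s*θ₂/(θ₁+s*θ₂) with hψdef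
  have hden : 0 < θ₁ + s*θ₂ := by positivity
  have hψ0 : 0 < ψ := by positivity
  have hψ1 : ψ < 1 := by rw [hψdef, div_lt_one hden]; linarith
  have h1ψ : 0 < 1 - ψ := by linarith
  set A : ℝ → ℝ := fun t => t^(a-1)*(1-t)^(b-1) /
      (Real.Gamma a * Real.Gamma b * ((1-t)*θ₂)^(a+b)) with hAdef
  set F : ℝ → ℝ → ENNReal := fun y t =>
      ENNReal.ofReal (A t * (y^(a+b-1) * Real.exp (-(1/((1-t)*θ₂) * y)))) with hFdef
  -- Step 1: inner substitution
  have step1 : ∀ y ∈ Set.Ioi (0:ℝ),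
      gammaDensity b θ₂ y * ∫⁻ x in Set.Ioo 0 (s*y), gammaDensity a θ₁ x
        = ∫⁻ t in Set.Ioo 0 ψ, F y t := by
    intro y hy
    have hy' : (0:ℝ) < y := hy
    have hK : 0 < (θ₁/θ₂)*y := by positivity
    have hsy : s*y = ((θ₁/θ₂)*y)*(ψ/(1-ψ)) := by
      have h1 : 1-ψ = θ₁/(θ₁+s*θ₂) := by rw [hψdef]; field_simp; ring
      rw [h1, hψdef]
      field_simp
    rw [hsy, ← phi_image _ _ hK hψ0 hψ1,
      lintegral_image_1d measurableSet_Ioo (fun t ht => phi_deriv _ _ t ht hψ1)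
        (phi_inj _ _ hK hψ1),
      ← lintegral_const_mul' _ _ (by unfold gammaDensity; split <;> simp : gammaDensity b θ₂ y ≠ ⊤)]
    refine setLIntegral_congr_fun_ae measurableSet_Ioo (Filter.Eventually.of_forall ?_)
    intro t ht
    obtain ⟨ht0, htψ⟩ := ht
    have h1t : 0 < 1 - t := by linarith
    have hφ : 0 < (θ₁/θ₂)*y*(t/(1-t)) := by positivity
    rw [hFdef]
    simp only [gammaDensity, if_pos hy', if_pos hφ]
    rw [abs_of_pos (by positivity : (0:ℝ) < (θ₁/θ₂)*y/(1-t)^2)]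
    rw [← ENNReal.ofReal_mul (by positivity), ← ENNReal.ofReal_mul (by positivity)]
    rw [pointwise_id a θ₁ b θ₂ ha hθ₁ hb hθ₂ y t hy' ht0 (by linarith)]
  rw [setLIntegral_congr_fun_ae measurableSet_Ioi (Filter.Eventually.of_forall step1)]
  -- Step 2: swap
  rw [lintegral_lintegral_swap]
  swap
  · apply Measurable.aemeasurable
    apply Measurable.ennreal_ofReal
    apply Measurable.mul
    · have hAm : Measurable A := by
        apply Measurable.div
        · exact ((measurable_id.pow_const _).mul
            ((measurable_const.sub measurable_id).pow_const _))
        · exact measurable_const.mul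
            (((measurable_const.sub measurable_id).mul_const _).pow_const _)
      exact hAm.comp measurable_snd
    · apply Measurable.mul
      · exact measurable_fst.pow_const _
      · apply Real.measurable_exp.comp
        apply Measurable.neg
        exact (measurable_const.div
          (((measurable_const.sub measurable_snd).mul_const _))).mul measurable_fst
  -- Step 3: inner y integral
  have step3 : ∀ t ∈ Set.Ioo (0:ℝ) ψ,
      ∫⁻ y in Set.Ioi (0:ℝ), F y t
        = ENNReal.ofReal ((Real.Gamma (a+b) / (Real.Gamma a * Real.Gamma b)) *
            (t^(a-1)*(1-t)^(b-1))) := by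
    intro t ht
    obtain ⟨ht0, htψ⟩ := ht
    have h1t : 0 < 1 - t := by linarith
    have hr : 0 < 1/((1-t)*θ₂) := by positivity
    have hA : 0 ≤ A t := by
      rw [hAdef]
      have := Real.rpow_pos_of_pos (show (0:ℝ) < (1-t)*θ₂ by positivity) (a+b)
      positivity
    simp only [hFdef]
    simp_rw [ENNReal.ofReal_mul hA]
    rw [lintegral_const_mul' _ _ ENNReal.ofReal_ne_top,
      aux_gamma (a+b) _ (by linarith) hr,
      ← ENNReal.ofReal_mul hA]
    congr 1
    rw [one_div_one_div, hAdef]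
    have hpow : (0:ℝ) < ((1-t)*θ₂)^(a+b) :=
      Real.rpow_pos_of_pos (by positivity) _
    field_simp
  rw [setLIntegral_congr_fun_ae measurableSet_Ioo (Filter.Eventually.of_forall step3)]
  -- Step 4: convert to real integral
  rw [← ofReal_integral_eq_lintegral_ofReal]
  · rw [integral_const_mul, ← MeasureTheory.integral_Ioc_eq_integral_Ioo,
      ← intervalIntegral.integral_of_le hψ0.le]
  · exact (beta_integrable a b ψ ha hψ0 hψ1).const_mul _
  · filter_upwards [ae_restrict_mem measurableSet_Ioo] with t ⟨ht0, htψ⟩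
    have h1t : 0 < 1 - t := by linarith
    positivity


open Real Set in
/-- The outage probability `P(cX/Y < λ)` for independent Gamma random variables equals the
regularized incomplete Beta function evaluated at `ψ = λθ₂/(cθ₁ + λθ₂)`. -/
theorem stmt1 {α : Type*} [MeasureSpace α] [IsProbabilityMeasure (ℙ : Measure α)]
    (X Y : α → ℝ) (hX : Measurable X) (hY : Measurable Y)
    (hindep : IndepFun X Y)
    (a θ₁ b θ₂ c lam : ℝ) (ha : 0 < a) (hθ₁ : 0 < θ₁) (hb : 0 < b) (hθ₂ : 0 < θ₂)
    (hc : 0 < c) (hlam : 0 < lam)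
    (hXlaw : Measure.map X ℙ = volume.withDensity (gammaDensity a θ₁))
    (hYlaw : Measure.map Y ℙ = volume.withDensity (gammaDensity b θ₂)) :
    (ℙ {ω | c * X ω / Y ω < lam}).toReal =
      (Real.Gamma (a + b) / (Real.Gamma a * Real.Gamma b)) *
        ∫ t in (0:ℝ)..(lam * θ₂ / (c * θ₁ + lam * θ₂)), t ^ (a - 1) * (1 - t) ^ (b - 1) := by
  set f := gammaDensity a θ₁ with hfdef
  set g := gammaDensity b θ₂ with hgdef
  set μ := volume.withDensity f with hμdef
  set ν := volume.withDensity g with hνdef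
  have : SigmaFinite μ := SigmaFinite.withDensity_of_ne_top' (gammaDensity_ne_top a θ₁)
  have : SigmaFinite ν := SigmaFinite.withDensity_of_ne_top' (gammaDensity_ne_top b θ₂)
  set S : Set (ℝ × ℝ) := {p : ℝ × ℝ | c * p.1 / p.2 < lam} with hSdef
  have hSmeas : MeasurableSet S :=
    measurableSet_lt ((measurable_const.mul measurable_fst).div measurable_snd) measurable_const
  set S' : Set (ℝ × ℝ) := {p : ℝ × ℝ | 0 < p.2 ∧ p.1 ∈ Set.Ioo 0 ((lam/c)*p.2)} with hS'def
  have hS'meas : MeasurableSet S' := by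
    refine (measurableSet_lt measurable_const measurable_snd).inter ?_
    exact (measurableSet_lt measurable_const measurable_fst).inter
      (measurableSet_lt measurable_fst (measurable_const.mul measurable_snd))
  have hsub : S' ⊆ S := by
    rintro ⟨x, y⟩ ⟨hy, hx0, hxy⟩
    simp only [hSdef, Set.mem_setOf_eq]
    rw [div_lt_iff₀ hy]
    calc c * x < c * ((lam/c)*y) := by exact (mul_lt_mul_iff_right₀ hc).2 hxy
    _ = lam * y := by field_simp
  have hμIic : μ (Set.Iic 0) = 0 := by
    rw [hμdef, withDensity_apply _ measurableSet_Iic]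
    rw [setLIntegral_congr_fun_ae (g := fun _ => (0:ENNReal)) measurableSet_Iic
      (Filter.Eventually.of_forall (fun x hx => by
        simp only [hfdef, gammaDensity, if_neg (not_lt.2 (Set.mem_Iic.mp hx))]))]
    simp
  have hνIic : ν (Set.Iic 0) = 0 := by
    rw [hνdef, withDensity_apply _ measurableSet_Iic]
    rw [setLIntegral_congr_fun_ae (g := fun _ => (0:ENNReal)) measurableSet_Iic
      (Filter.Eventually.of_forall (fun x hx => by
        simp only [hgdef, gammaDensity, if_neg (not_lt.2 (Set.mem_Iic.mp hx))]))]
    simp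
  have hnull : (μ.prod ν) (S \ S') = 0 := by
    have hsub2 : S \ S' ⊆ (Set.Iic 0 ×ˢ (Set.univ : Set ℝ)) ∪ ((Set.univ : Set ℝ) ×ˢ Set.Iic 0) := by
      rintro ⟨x, y⟩ ⟨hpS, hpS'⟩
      by_contra hcon
      simp only [Set.mem_union, Set.mem_prod, Set.mem_Iic, Set.mem_univ, and_true, true_and,
        not_or, not_le] at hcon
      obtain ⟨hx, hy⟩ := hcon
      apply hpS'
      refine ⟨hy, hx, ?_⟩
      have : c * x / y < lam := hpS
      rw [div_lt_iff₀ hy] at this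
      show x < lam / c * y
      rw [show lam / c * y = lam * y / c by ring, lt_div_iff₀ hc]
      nlinarith
    refine measure_mono_null hsub2 ?_
    refine le_antisymm (le_trans (measure_union_le _ _) ?_) (by simp)
    rw [Measure.prod_prod, Measure.prod_prod, hμIic, hνIic]
    simp
  have hmes : (μ.prod ν) S = (μ.prod ν) S' := by
    calc (μ.prod ν) S = (μ.prod ν) (S' ∪ (S \ S')) := by rw [Set.union_diff_cancel hsub]
    _ = (μ.prod ν) S' := le_antisymm (le_trans (measure_union_le _ _) (by rw [hnull, add_zero]))
      (measure_mono Set.subset_union_left)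
  -- identify the probability
  have hmap : Measure.map (fun ω => (X ω, Y ω)) ℙ = μ.prod ν := by
    rw [← hXlaw, ← hYlaw]
    exact (indepFun_iff_map_prod_eq_prod_map_map hX.aemeasurable hY.aemeasurable).mp hindep
  have hP : ℙ {ω | c * X ω / Y ω < lam} = (μ.prod ν) S := by
    have : {ω | c * X ω / Y ω < lam} = (fun ω => (X ω, Y ω)) ⁻¹' S := rfl
    rw [this, ← Measure.map_apply (hX.prodMk hY) hSmeas, hmap]
  -- compute the product measure of S'
  have hpre : ∀ y : ℝ, ((fun x => (x, y)) ⁻¹' S') =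
      if 0 < y then Set.Ioo 0 ((lam/c)*y) else ∅ := by
    intro y
    ext x
    by_cases hy : 0 < y <;> simp [hS'def, hy]
  have hprod : (μ.prod ν) S' =
      ∫⁻ y in Set.Ioi (0:ℝ), g y * ∫⁻ x in Set.Ioo 0 ((lam/c)*y), f x := by
    rw [Measure.prod_apply_symm hS'meas]
    have : ∀ y : ℝ, μ ((fun x => (x, y)) ⁻¹' S') =
        (Set.Ioi (0:ℝ)).indicator (fun y => μ (Set.Ioo 0 ((lam/c)*y))) y := by
      intro y
      rw [hpre y, Set.indicator_apply]
      by_cases hy : 0 < y <;> simp [hy, Set.mem_Ioi]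
    simp_rw [this]
    rw [lintegral_indicator measurableSet_Ioi, hνdef, restrict_withDensity measurableSet_Ioi,
      lintegral_withDensity_eq_lintegral_mul_non_measurable _ (gammaDensity_measurable b θ₂)
        (Filter.Eventually.of_forall (fun y => lt_of_le_of_ne le_top (gammaDensity_ne_top b θ₂ y)))]
    simp only [Pi.mul_apply]
    congr 1
    ext y
    rw [hμdef, withDensity_apply _ measurableSet_Ioo]
  have hψ : (lam/c)*θ₂/(θ₁+(lam/c)*θ₂) = lam * θ₂ / (c * θ₁ + lam * θ₂) := by
    rw [div_eq_div_iff (by positivity) (by positivity)]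
    field_simp
  have hfinal : (μ.prod ν) S = ENNReal.ofReal ((Real.Gamma (a + b) / (Real.Gamma a * Real.Gamma b)) *
      ∫ t in (0:ℝ)..(lam * θ₂ / (c * θ₁ + lam * θ₂)), t ^ (a - 1) * (1 - t) ^ (b - 1)) := by
    rw [hmes, hprod, key a θ₁ b θ₂ (lam/c) ha hθ₁ hb hθ₂ (by positivity), hψ]
  rw [hP, hfinal, ENNReal.toReal_ofReal]
  have hψ1 : lam * θ₂ / (c * θ₁ + lam * θ₂) < 1 := by
    rw [div_lt_one (by positivity)]; nlinarith
  have hI : 0 ≤ ∫ t in (0:ℝ)..(lam * θ₂ / (c * θ₁ + lam * θ₂)), t ^ (a - 1) * (1 - t) ^ (b - 1) := by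
    apply intervalIntegral.integral_nonneg (by positivity)
    intro u hu
    obtain ⟨hu0, hu1⟩ := hu
    have h1u : 0 ≤ 1 - u := by linarith
    exact mul_nonneg (Real.rpow_nonneg hu0 _) (Real.rpow_nonneg h1u _)
  have hG := Real.Gamma_pos_of_pos ha
  have hG' := Real.Gamma_pos_of_pos hb
  have hG'' := Real.Gamma_pos_of_pos (show (0:ℝ) < a + b by linarith)
  exact mul_nonneg (by positivity) hI
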